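/- Let q = 3^(2m+1) and θ = 3^m. For every nonzero t ∈ F_q, the kernel of the additive homomorphism ς_t(s) = t·s^(3θ) − t^(3θ)·s is exactly the three-element set {0, t, −t}. -/

import Mathlib

/-- The kernel of `ς_t(s) = t·s^(3θ) − t^(3θ)·s` is exactly `{0, t, −t}`. -/
theorem stmt_1 (m : ℕ) (t : GaloisField 3 (2 * m + 1)) (ht : t ≠ 0) :
    {s : GaloisField 3 (2 * m + 1) |
        t * s ^ (3 ^ (m + 1)) - t ^ (3 ^ (m + 1)) * s = 0} = {0, t, -t} := by
  haveI : Fintype (GaloisField 3 (2 * m + 1)) := Fintype.ofFinite _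
  have hcard : Fintype.card (GaloisField 3 (2 * m + 1)) = 3 ^ (2 * m + 1) :=
    by rw [Fintype.card_eq_nat_card]; exact GaloisField.card 3 (2 * m + 1) (by omega)
  have hodd : Odd (3 ^ (m + 1)) := Odd.pow (by decide)
  ext s
  simp only [Set.mem_setOf_eq, Set.mem_insert_iff, Set.mem_singleton_iff]
  constructor
  · intro h
    set u : GaloisField 3 (2 * m + 1) := s * t⁻¹ with hu
    have hsu : s = u * t := by rw [hu, mul_assoc, inv_mul_cancel₀ ht, mul_one]
    have h1 : u ^ (3 ^ (m + 1)) = u := by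
      rw [hu, mul_pow, inv_pow]
      field_simp
      linear_combination h
    have hq : u ^ (3 ^ (2 * m + 1)) = u := by
      rw [← hcard]; exact FiniteField.pow_card u
    have h3 : u ^ (3 ^ (2 * m + 2)) = u := by
      have e : (3 : ℕ) ^ (2 * m + 2) = 3 ^ (m + 1) * 3 ^ (m + 1) := by
        rw [← pow_add]; ring_nf
      rw [e, pow_mul, h1, h1]
    have h4 : u ^ (3 ^ (2 * m + 2)) = u ^ 3 := by
      have e : (3 : ℕ) ^ (2 * m + 2) = 3 ^ (2 * m + 1) * 3 := by
        rw [← pow_succ]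
      rw [e, pow_mul, hq]
    have h2 : u * (u - 1) * (u + 1) = 0 := by
      have : u ^ 3 = u := by rw [← h4, h3]
      linear_combination this
    rcases mul_eq_zero.mp h2 with h5 | h5
    · rcases mul_eq_zero.mp h5 with h6 | h6
      · left; rw [hsu, h6, zero_mul]
      · right; left; rw [hsu, sub_eq_zero.mp h6, one_mul]
      -- done
    · right; right
      have : u = -1 := by linear_combination h5
      rw [hsu, this]; ring
  · rintro (rfl | rfl | rfl)
    · simp
    · ring_nf
    · rw [hodd.neg_pow]; ring_nf
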